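/- Let f be a nonnegative finite superharmonic function on the dyadic tree (i.e., f(σ) ≥ (f(σ+) + f(σ-))/2 for every vertex σ). Let Δf(σ) = f(σ) - (f(σ+)+f(σ-))/2 ≥ 0 and define F(x) = liminf_{n→∞} f(σ_n(x)) along the branch determined by the binary expansion of x ∈ [0,1]. Then ∫₀¹ F(x) dx + Σ_{σ} 2^{-|σ|} Δf(σ) ≤ f(root). -/

import Mathlib

open Filter MeasureTheory

private lemma sum_range_two_mul (g : ℕ → ℝ) (m : ℕ) :
    ∑ i ∈ Finset.range (2*m), g i = ∑ k ∈ Finset.range m, (g (2*k) + g (2*k+1)) := by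
  induction m with
  | zero => simp
  | succ m ih =>
    have h : 2 * (m+1) = (2*m) + 1 + 1 := by ring
    rw [h, Finset.sum_range_succ, Finset.sum_range_succ, ih, Finset.sum_range_succ]
    ring

/-- Green's formula on the dyadic tree. Vertices at level n are indexed by
k < 2ⁿ (the dyadic intervals), the children of (n,k) being (n+1,2k) and (n+1,2k+1).
If f is a nonnegative superharmonic function on the tree, Δf its discrete Laplacian and
F(x) the liminf of f along the branch of x ∈ [0,1], then
∫₀¹ F + Σ_σ 2^{-|σ|} Δf(σ) ≤ f(root). -/
theorem stmt13 (f : ℕ → ℕ → ℝ)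
    (hnonneg : ∀ n k, k < 2^n → 0 ≤ f n k)
    (hsuper : ∀ n k, k < 2^n → (f (n+1) (2*k) + f (n+1) (2*k+1))/2 ≤ f n k) :
    (∫ x in Set.Ioo (0:ℝ) 1,
        Filter.liminf (fun n : ℕ => f n ⌊(2:ℝ)^n * x⌋₊) Filter.atTop)
      + ∑' n : ℕ, ∑ k ∈ Finset.range (2^n),
          ((2:ℝ)^n)⁻¹ * (f n k - (f (n+1) (2*k) + f (n+1) (2*k+1))/2)
      ≤ f 0 0 := by
  -- S n is the average of f at level n
  set S : ℕ → ℝ := fun n => ∑ k ∈ Finset.range (2^n), ((2:ℝ)^n)⁻¹ * f n k with hSdef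
  set D : ℕ → ℝ := fun n => ∑ k ∈ Finset.range (2^n),
      ((2:ℝ)^n)⁻¹ * (f n k - (f (n+1) (2*k) + f (n+1) (2*k+1))/2) with hDdef
  have hS0 : S 0 = f 0 0 := by simp [hSdef]
  have hSnonneg : ∀ n, 0 ≤ S n := by
    intro n
    refine Finset.sum_nonneg fun k hk => ?_
    have := hnonneg n k (Finset.mem_range.mp hk)
    positivity
  have hDnonneg : ∀ n, 0 ≤ D n := by
    intro n
    refine Finset.sum_nonneg fun k hk => ?_
    have h := hsuper n k (Finset.mem_range.mp hk)
    have h2 : (0:ℝ) ≤ ((2:ℝ)^n)⁻¹ := by positivity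
    nlinarith
  have hD : ∀ n, D n = S n - S (n+1) := by
    intro n
    have h2 : (2:ℕ)^(n+1) = 2 * 2^n := by ring
    simp only [hDdef, hSdef, h2]
    rw [sum_range_two_mul (fun j => ((2:ℝ)^(n+1))⁻¹ * f (n+1) j) (2^n),
      ← Finset.sum_sub_distrib]
    refine Finset.sum_congr rfl fun k _ => ?_
    have hp : ((2:ℝ)^n) ≠ 0 := by positivity
    rw [pow_succ]
    field_simp
  have hSanti : ∀ n, S (n+1) ≤ S n := fun n => by have := hDnonneg n; rw [hD n] at this; linarith
  have hSle : ∀ m n, m ≤ n → S n ≤ S m := fun m n h => (antitone_nat_of_succ_le hSanti) h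
  -- the step functions in ℝ≥0∞
  set g : ℕ → ℝ → ENNReal := fun n x => ENNReal.ofReal (f n ⌊(2:ℝ)^n * x⌋₊) with hgdef
  have hgmeas : ∀ n, Measurable (g n) := by
    intro n
    exact (measurable_from_nat.comp ((measurable_id.const_mul _).nat_floor)).ennreal_ofReal
  -- lintegral of the step functions
  have hstep : ∀ n, ∫⁻ x in Set.Ioo (0:ℝ) 1, g n x = ENNReal.ofReal (S n) := by
    intro n
    have hpow : (0:ℝ) < 2^n := by positivity
    have hcast : ((2^n : ℕ) : ℝ) = (2:ℝ)^n := by push_cast; ring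
    have hcover : Set.Ico (0:ℝ) 1
        = ⋃ k ∈ Finset.range (2^n), Set.Ico ((k:ℝ)/2^n) (((k:ℝ)+1)/2^n) := by
      ext x
      simp only [Set.mem_Ico, Set.mem_iUnion, Finset.mem_range, exists_prop]
      constructor
      · rintro ⟨h0, h1⟩
        have hx0 : (0:ℝ) ≤ 2^n * x := by positivity
        refine ⟨⌊(2:ℝ)^n * x⌋₊, ?_, ?_, ?_⟩
        · rw [← @Nat.cast_lt ℝ]
          calc (⌊(2:ℝ)^n * x⌋₊ : ℝ) ≤ 2^n * x := Nat.floor_le hx0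
            _ < 2^n := by nlinarith
            _ = ((2^n : ℕ) : ℝ) := hcast.symm
        · rw [div_le_iff₀ hpow, mul_comm x]
          exact Nat.floor_le hx0
        · rw [lt_div_iff₀ hpow, mul_comm x]
          exact Nat.lt_floor_add_one _
      · rintro ⟨k, hk, h1, h2⟩
        have hk' : (k:ℝ) + 1 ≤ 2^n := by
          rw [← hcast]; exact_mod_cast Nat.succ_le_of_lt hk
        constructor
        · have : (0:ℝ) ≤ (k:ℝ)/2^n := by positivity
          linarith
        · calc x < ((k:ℝ)+1)/2^n := h2
            _ ≤ (2:ℝ)^n/2^n := by gcongr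
            _ = 1 := div_self (ne_of_gt hpow)
    have hdisj : Set.PairwiseDisjoint ↑(Finset.range (2^n))
        (fun k : ℕ => Set.Ico ((k:ℝ)/2^n) (((k:ℝ)+1)/2^n)) := by
      have key : ∀ i j : ℕ, i < j →
          Disjoint (Set.Ico ((i:ℝ)/2^n) (((i:ℝ)+1)/2^n))
            (Set.Ico ((j:ℝ)/2^n) (((j:ℝ)+1)/2^n)) := by
        intro i j hij
        rw [Set.Ico_disjoint_Ico]
        have hij' : (i:ℝ) + 1 ≤ (j:ℝ) := by exact_mod_cast hij
        have : ((i:ℝ)+1)/2^n ≤ (j:ℝ)/2^n := by gcongr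
        calc min (((i:ℝ)+1)/2^n) (((j:ℝ)+1)/2^n) ≤ ((i:ℝ)+1)/2^n := min_le_left _ _
          _ ≤ (j:ℝ)/2^n := this
          _ ≤ max ((i:ℝ)/2^n) ((j:ℝ)/2^n) := le_max_right _ _
      intro i _ j _ hij
      rcases lt_or_gt_of_ne hij with h | h
      · exact key i j h
      · exact (key j i h).symm
    calc ∫⁻ x in Set.Ioo (0:ℝ) 1, g n x
        = ∫⁻ x in Set.Ico (0:ℝ) 1, g n x := setLIntegral_congr Ioo_ae_eq_Ico
      _ = ∑ k ∈ Finset.range (2^n),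
            ∫⁻ x in Set.Ico ((k:ℝ)/2^n) (((k:ℝ)+1)/2^n), g n x := by
          rw [hcover]
          exact lintegral_biUnion_finset hdisj (fun k _ => measurableSet_Ico) _
      _ = ∑ k ∈ Finset.range (2^n), ENNReal.ofReal (((2:ℝ)^n)⁻¹ * f n k) := by
          refine Finset.sum_congr rfl fun k hk => ?_
          have hk' := Finset.mem_range.mp hk
          have hfl : ∀ x ∈ Set.Ico ((k:ℝ)/2^n) (((k:ℝ)+1)/2^n),
              g n x = ENNReal.ofReal (f n k) := by
            intro x hx
            have hx1 : (k:ℝ) ≤ 2^n * x := by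
              rw [mul_comm, ← div_le_iff₀ hpow]; exact hx.1
            have hx2 : 2^n * x < (k:ℝ) + 1 := by
              rw [mul_comm, ← lt_div_iff₀ hpow]; exact hx.2
            have h0 : (0:ℝ) ≤ 2^n * x := le_trans (by positivity) hx1
            have : ⌊(2:ℝ)^n * x⌋₊ = k := by
              rw [Nat.floor_eq_iff h0]
              exact ⟨hx1, hx2⟩
            simp [hgdef, this]
          rw [setLIntegral_congr_fun measurableSet_Ico hfl,
            setLIntegral_const, Real.volume_Ico]
          have hlen : ((k:ℝ)+1)/2^n - (k:ℝ)/2^n = ((2:ℝ)^n)⁻¹ := by ring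
          rw [hlen, ← ENNReal.ofReal_mul' (by positivity : (0:ℝ) ≤ ((2:ℝ)^n)⁻¹),
            mul_comm (f n k)]
      _ = ENNReal.ofReal (S n) := by
          rw [hSdef, ENNReal.ofReal_sum_of_nonneg (fun k hk => by
            have := hnonneg n k (Finset.mem_range.mp hk); positivity)]
  -- the liminf in ℝ≥0∞
  set L : ℝ → ENNReal := fun x => Filter.liminf (fun n => g n x) Filter.atTop with hLdef
  have hLmeas : Measurable L := Measurable.liminf hgmeas
  have hFatou : ∫⁻ x in Set.Ioo (0:ℝ) 1, L x
      ≤ Filter.liminf (fun n => ENNReal.ofReal (S n)) Filter.atTop := by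
    refine le_trans (lintegral_liminf_le hgmeas) ?_
    simp_rw [hstep]
    exact le_rfl
  have hle : ∀ N, ∫⁻ x in Set.Ioo (0:ℝ) 1, L x ≤ ENNReal.ofReal (S N) := by
    intro N
    refine hFatou.trans (Filter.liminf_le_of_frequently_le' ?_)
    refine Filter.Eventually.frequently ?_
    filter_upwards [Filter.eventually_ge_atTop N] with n hn
    exact ENNReal.ofReal_le_ofReal (hSle N n hn)
  have hfin : ∫⁻ x in Set.Ioo (0:ℝ) 1, L x ≠ ⊤ :=
    ne_top_of_le_ne_top ENNReal.ofReal_ne_top (hle 0)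
  have haefin : ∀ᵐ x ∂(volume.restrict (Set.Ioo (0:ℝ) 1)), L x < ⊤ := ae_lt_top hLmeas hfin
  have hInt : Integrable (fun x => (L x).toReal) (volume.restrict (Set.Ioo (0:ℝ) 1)) :=
    integrable_toReal_of_lintegral_ne_top hLmeas.aemeasurable hfin
  -- pointwise facts
  have hfloorlt : ∀ (m : ℕ) (x : ℝ), 0 ≤ x → x < 1 → ⌊(2:ℝ)^m * x⌋₊ < 2^m := by
    intro m x h0 h1
    have hp : (0:ℝ) < 2^m := by positivity
    rw [← @Nat.cast_lt ℝ]
    calc (⌊(2:ℝ)^m * x⌋₊ : ℝ) ≤ 2^m * x := Nat.floor_le (by positivity)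
      _ < 2^m := by nlinarith
      _ = ((2^m : ℕ) : ℝ) := by push_cast; ring
  have hF0 : 0 ≤ᵐ[volume.restrict (Set.Ioo (0:ℝ) 1)]
      fun x => Filter.liminf (fun n : ℕ => f n ⌊(2:ℝ)^n * x⌋₊) Filter.atTop := by
    filter_upwards [ae_restrict_mem measurableSet_Ioo] with x hx
    rw [Filter.liminf_eq]
    refine Real.sSup_nonneg' ⟨0, ?_, le_rfl⟩
    exact Filter.Eventually.of_forall fun m => hnonneg _ _ (hfloorlt m x hx.1.le hx.2)
  have hptF : ∀ᵐ x ∂(volume.restrict (Set.Ioo (0:ℝ) 1)),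
      Filter.liminf (fun n : ℕ => f n ⌊(2:ℝ)^n * x⌋₊) Filter.atTop ≤ (L x).toReal := by
    filter_upwards [haefin] with x hxfin
    rw [Filter.liminf_eq]
    refine Real.sSup_le (fun c hc => ?_) ENNReal.toReal_nonneg
    rw [← ENNReal.ofReal_le_iff_le_toReal hxfin.ne]
    refine Filter.le_liminf_of_le (by isBoundedDefault) ?_
    exact hc.mono fun n hn => ENNReal.ofReal_le_ofReal hn
  have hIF : ∀ N, (∫ x in Set.Ioo (0:ℝ) 1,
      Filter.liminf (fun n : ℕ => f n ⌊(2:ℝ)^n * x⌋₊) Filter.atTop) ≤ S N := by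
    intro N
    have h1 : (∫ x in Set.Ioo (0:ℝ) 1,
        Filter.liminf (fun n : ℕ => f n ⌊(2:ℝ)^n * x⌋₊) Filter.atTop)
        ≤ ∫ x in Set.Ioo (0:ℝ) 1, (L x).toReal :=
      integral_mono_of_nonneg hF0 hInt hptF
    have h2 : ∫ x in Set.Ioo (0:ℝ) 1, (L x).toReal
        = (∫⁻ x in Set.Ioo (0:ℝ) 1, L x).toReal :=
      integral_toReal hLmeas.aemeasurable haefin
    have h3 : (∫⁻ x in Set.Ioo (0:ℝ) 1, L x).toReal ≤ S N := by
      have := ENNReal.toReal_mono ENNReal.ofReal_ne_top (hle N)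
      rwa [ENNReal.toReal_ofReal (hSnonneg N)] at this
    linarith
  -- telescoping and conclusion
  have hTel : ∀ N, ∑ n ∈ Finset.range N, D n = S 0 - S N := by
    intro N
    have := Finset.sum_range_sub' S N
    simp_rw [hD]
    exact this
  have htsum : ∑' n, D n ≤ f 0 0 - (∫ x in Set.Ioo (0:ℝ) 1,
      Filter.liminf (fun n : ℕ => f n ⌊(2:ℝ)^n * x⌋₊) Filter.atTop) := by
    refine Real.tsum_le_of_sum_range_le hDnonneg fun N => ?_
    rw [hTel N, hS0]
    have := hIF N
    linarith
  linarith [htsum]
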